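/- Let A_cl be an n×n real matrix, E an n×p real matrix, Q a symmetric positive definite n×n matrix, and β > 0 a scalar such that Q A_clᵀ + A_cl Q + β·Q + β⁻¹·E Eᵀ ⪯ 0. Let w : [0,∞) → ℝᵖ be a function with ‖w(t)‖₂ ≤ 1 for all t ≥ 0, and let ξ : [0,∞) → ℝⁿ be differentiable with ξ'(t) = A_cl ξ(t) + E w(t) for all t ≥ 0. If ξ(0)ᵀQ⁻¹ξ(0) ≤ 1, then ξ(t)ᵀQ⁻¹ξ(t) ≤ 1 for all t ≥ 0; that is, the ellipsoid E_w = {x ∈ ℝⁿ : xᵀQ⁻¹x ≤ 1} is invariant for the disturbed system. -/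

import Mathlib

open Matrix

noncomputable section

private lemma dp_aux {m k : ℕ} (A : Matrix (Fin m) (Fin k) ℝ) (u : Fin k → ℝ) (v : Fin m → ℝ) :
    (A *ᵥ u) ⬝ᵥ v = u ⬝ᵥ (Aᵀ *ᵥ v) := by
  rw [dotProduct_comm, dotProduct_mulVec, dotProduct_comm, mulVec_transpose]

private lemma dp_self_nonneg {m : ℕ} (u : Fin m → ℝ) : 0 ≤ u ⬝ᵥ u :=
  Finset.sum_nonneg fun i _ => mul_self_nonneg _

private lemma key_ineq (n p : ℕ)
    (Acl : Matrix (Fin n) (Fin n) ℝ) (E : Matrix (Fin n) (Fin p) ℝ)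
    (Q : Matrix (Fin n) (Fin n) ℝ) (hQsym : Q.IsSymm) (hQ : Q.PosDef)
    (β : ℝ) (hβ : 0 < β)
    (hLMI : (-(Q * Aclᵀ + Acl * Q + β • Q + β⁻¹ • (E * Eᵀ))).PosSemidef)
    (x : Fin n → ℝ) (v : Fin p → ℝ) (hv : v ⬝ᵥ v ≤ 1) :
    (Acl *ᵥ x + E *ᵥ v) ⬝ᵥ (Q⁻¹ *ᵥ x) + x ⬝ᵥ (Q⁻¹ *ᵥ (Acl *ᵥ x + E *ᵥ v))
      ≤ β * (1 - x ⬝ᵥ (Q⁻¹ *ᵥ x)) := by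
  have hdet : IsUnit Q.det := hQ.det_pos.ne'.isUnit
  have hQP : Q * Q⁻¹ = 1 := Q.mul_nonsing_inv hdet
  set y : Fin n → ℝ := Q⁻¹ *ᵥ x with hy
  have hx : x = Q *ᵥ y := by
    rw [hy, mulVec_mulVec, hQP, one_mulVec]
  -- rewrite all terms in terms of y
  have hterm1 : (Acl *ᵥ x) ⬝ᵥ y = y ⬝ᵥ ((Q * Aclᵀ) *ᵥ y) := by
    rw [hx, mulVec_mulVec, dp_aux, transpose_mul, hQsym.eq]
  have hQy : ∀ z : Fin n → ℝ, x ⬝ᵥ (Q⁻¹ *ᵥ z) = y ⬝ᵥ z := by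
    intro z
    rw [hx, dp_aux Q y (Q⁻¹ *ᵥ z), hQsym.eq, mulVec_mulVec, hQP, one_mulVec]
  have hterm3 : x ⬝ᵥ (Q⁻¹ *ᵥ (Acl *ᵥ x)) = y ⬝ᵥ ((Acl * Q) *ᵥ y) := by
    rw [hQy, hx, mulVec_mulVec]
  set a2 : Fin p → ℝ := Eᵀ *ᵥ y with ha2
  have hterm2 : (E *ᵥ v) ⬝ᵥ y = a2 ⬝ᵥ v := by
    rw [dp_aux, dotProduct_comm]
  have hterm4 : x ⬝ᵥ (Q⁻¹ *ᵥ (E *ᵥ v)) = a2 ⬝ᵥ v := by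
    rw [hQy]
    rw [show y ⬝ᵥ (E *ᵥ v) = (E *ᵥ v) ⬝ᵥ y from dotProduct_comm _ _, hterm2]
  have hVy : x ⬝ᵥ (Q⁻¹ *ᵥ x) = y ⬝ᵥ (Q *ᵥ y) := by
    rw [← hy, hx, dp_aux, hQsym.eq, ← hx, dotProduct_comm, hx]
  have hd : y ⬝ᵥ ((E * Eᵀ) *ᵥ y) = a2 ⬝ᵥ a2 := by
    rw [← mulVec_mulVec, ha2]
    rw [show y ⬝ᵥ (E *ᵥ (Eᵀ *ᵥ y)) = (E *ᵥ (Eᵀ *ᵥ y)) ⬝ᵥ y from dotProduct_comm _ _, dp_aux]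
  -- LMI applied to y
  have hMn : y ⬝ᵥ ((Q * Aclᵀ + Acl * Q + β • Q + β⁻¹ • (E * Eᵀ)) *ᵥ y) ≤ 0 := by
    have h := hLMI.dotProduct_mulVec_nonneg y
    have h' : (0:ℝ) ≤ y ⬝ᵥ ((-(Q * Aclᵀ + Acl * Q + β • Q + β⁻¹ • (E * Eᵀ))) *ᵥ y) := by
      simpa using h
    rw [neg_mulVec, dotProduct_neg] at h'
    linarith
  have hLMIy : y ⬝ᵥ ((Q * Aclᵀ) *ᵥ y) + y ⬝ᵥ ((Acl * Q) *ᵥ y)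
      + β * (y ⬝ᵥ (Q *ᵥ y)) + β⁻¹ * (a2 ⬝ᵥ a2) ≤ 0 := by
    have hexp : y ⬝ᵥ ((Q * Aclᵀ + Acl * Q + β • Q + β⁻¹ • (E * Eᵀ)) *ᵥ y)
        = y ⬝ᵥ ((Q * Aclᵀ) *ᵥ y) + y ⬝ᵥ ((Acl * Q) *ᵥ y)
          + β * (y ⬝ᵥ (Q *ᵥ y)) + β⁻¹ * (y ⬝ᵥ ((E * Eᵀ) *ᵥ y)) := by
      simp only [add_mulVec, smul_mulVec, dotProduct_add, dotProduct_smul, smul_eq_mul]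
    rw [← hd]
    linarith [hexp ▸ hMn]
  -- cross term bound
  have hcross : 2 * (a2 ⬝ᵥ v) ≤ β⁻¹ * (a2 ⬝ᵥ a2) + β * (v ⬝ᵥ v) := by
    have h0 : 0 ≤ (a2 - β • v) ⬝ᵥ (a2 - β • v) := dp_self_nonneg _
    have hexp : (a2 - β • v) ⬝ᵥ (a2 - β • v)
        = a2 ⬝ᵥ a2 - 2 * β * (a2 ⬝ᵥ v) + β ^ 2 * (v ⬝ᵥ v) := by
      simp only [sub_dotProduct, dotProduct_sub, smul_dotProduct, dotProduct_smul,
        smul_eq_mul]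
      have : v ⬝ᵥ a2 = a2 ⬝ᵥ v := dotProduct_comm _ _
      rw [this]; ring
    rw [hexp] at h0
    have hβ' : 0 < β⁻¹ := inv_pos.mpr hβ
    have := mul_le_mul_of_nonneg_left (by linarith : 2 * β * (a2 ⬝ᵥ v) ≤ a2 ⬝ᵥ a2 + β ^ 2 * (v ⬝ᵥ v)) hβ'.le
    calc 2 * (a2 ⬝ᵥ v) = β⁻¹ * (2 * β * (a2 ⬝ᵥ v)) := by field_simp
      _ ≤ β⁻¹ * (a2 ⬝ᵥ a2 + β ^ 2 * (v ⬝ᵥ v)) := this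
      _ = β⁻¹ * (a2 ⬝ᵥ a2) + β * (v ⬝ᵥ v) := by field_simp
  have hv' := mul_le_mul_of_nonneg_left hv hβ.le
  calc (Acl *ᵥ x + E *ᵥ v) ⬝ᵥ (Q⁻¹ *ᵥ x) + x ⬝ᵥ (Q⁻¹ *ᵥ (Acl *ᵥ x + E *ᵥ v))
      = y ⬝ᵥ ((Q * Aclᵀ) *ᵥ y) + y ⬝ᵥ ((Acl * Q) *ᵥ y) + 2 * (a2 ⬝ᵥ v) := by
        rw [add_dotProduct, mulVec_add, dotProduct_add, ← hy, hterm1, hterm2, hterm3, hterm4]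
        ring
    _ ≤ β * (1 - x ⬝ᵥ (Q⁻¹ *ᵥ x)) := by rw [hVy]; linarith

theorem stmt7 (n p : ℕ)
    (Acl : Matrix (Fin n) (Fin n) ℝ) (E : Matrix (Fin n) (Fin p) ℝ)
    (Q : Matrix (Fin n) (Fin n) ℝ) (hQsym : Q.IsSymm) (hQ : Q.PosDef)
    (β : ℝ) (hβ : 0 < β)
    (hLMI : (-(Q * Aclᵀ + Acl * Q + β • Q + β⁻¹ • (E * Eᵀ))).PosSemidef)
    (w : ℝ → (Fin p → ℝ)) (hw : ∀ t ≥ (0 : ℝ), w t ⬝ᵥ w t ≤ 1)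
    (ξ : ℝ → (Fin n → ℝ))
    (hdyn : ∀ t ≥ (0 : ℝ), HasDerivAt ξ (Acl *ᵥ ξ t + E *ᵥ w t) t)
    (h0 : ξ 0 ⬝ᵥ (Q⁻¹ *ᵥ ξ 0) ≤ 1) :
    ∀ t ≥ (0 : ℝ), ξ t ⬝ᵥ (Q⁻¹ *ᵥ ξ t) ≤ 1 := by
  set P := Q⁻¹ with hP
  set V : ℝ → ℝ := fun s => ξ s ⬝ᵥ (P *ᵥ ξ s) with hVdef
  set ξ' : ℝ → (Fin n → ℝ) := fun s => Acl *ᵥ ξ s + E *ᵥ w s with hξ'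
  set D : ℝ → ℝ := fun s => ξ' s ⬝ᵥ (P *ᵥ ξ s) + ξ s ⬝ᵥ (P *ᵥ ξ' s) with hD
  have hV' : ∀ s ≥ (0 : ℝ), HasDerivAt V (D s) s := by
    intro s hs
    have hci : ∀ i, HasDerivAt (fun u => ξ u i) (ξ' s i) s := hasDerivAt_pi.mp (hdyn s hs)
    have h2 : ∀ i, HasDerivAt (fun u => (P *ᵥ ξ u) i) ((P *ᵥ ξ' s) i) s := by
      intro i
      have : HasDerivAt (fun u => ∑ j, P i j * ξ u j) (∑ j, P i j * ξ' s j) s :=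
        HasDerivAt.fun_sum (fun j _ => (hci j).const_mul _)
      simpa [mulVec, dotProduct] using this
    have h3 : HasDerivAt (fun u => ∑ i, ξ u i * (P *ᵥ ξ u) i)
        (∑ i, (ξ' s i * (P *ᵥ ξ s) i + ξ s i * (P *ᵥ ξ' s) i)) s :=
      HasDerivAt.fun_sum (fun i _ => (hci i).mul (h2 i))
    simpa [hVdef, hD, dotProduct, Finset.sum_add_distrib] using h3
  set g : ℝ → ℝ := fun s => Real.exp (β * s) * (V s - 1) with hg
  have hg' : ∀ s ≥ (0 : ℝ), HasDerivAt g
      (Real.exp (β * s) * β * (V s - 1) + Real.exp (β * s) * D s) s := by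
    intro s hs
    have he : HasDerivAt (fun u => Real.exp (β * u)) (Real.exp (β * s) * β) s := by
      simpa using ((hasDerivAt_id s).const_mul β).exp
    exact he.mul ((hV' s hs).sub_const 1)
  have hDbound : ∀ s ≥ (0 : ℝ), D s ≤ β * (1 - V s) := by
    intro s hs
    exact key_ineq n p Acl E Q hQsym hQ β hβ hLMI (ξ s) (w s) (hw s hs)
  have hg'nonpos : ∀ s ≥ (0 : ℝ),
      Real.exp (β * s) * β * (V s - 1) + Real.exp (β * s) * D s ≤ 0 := by
    intro s hs
    have h1 := hDbound s hs
    have h2 := (Real.exp_pos (β * s)).le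
    nlinarith [mul_le_mul_of_nonneg_left h1 h2]
  have hanti : AntitoneOn g (Set.Ici 0) := by
    apply antitoneOn_of_deriv_nonpos (convex_Ici 0)
    · exact fun s hs => ((hg' s hs).continuousAt).continuousWithinAt
    · intro s hs
      rw [interior_Ici] at hs
      exact (hg' s (le_of_lt hs)).differentiableAt.differentiableWithinAt
    · intro s hs
      rw [interior_Ici] at hs
      rw [(hg' s (le_of_lt hs)).deriv]
      exact hg'nonpos s (le_of_lt hs)
  intro t ht
  have := hanti (Set.self_mem_Ici) (Set.mem_Ici.mpr ht) ht
  have hg0 : g 0 ≤ 0 := by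
    have h0' : V 0 ≤ 1 := h0
    simp only [hg, mul_zero, Real.exp_zero, one_mul]
    linarith
  have hgt : g t ≤ 0 := le_trans this hg0
  have hexp := Real.exp_pos (β * t)
  have h5 : V t - 1 ≤ 0 := by
    by_contra hc
    push_neg at hc
    have : 0 < Real.exp (β * t) * (V t - 1) := mul_pos hexp (by linarith)
    have hgt' : Real.exp (β * t) * (V t - 1) ≤ 0 := hgt
    linarith
  have hfin : V t ≤ 1 := by linarith
  exact hfin
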